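/- Let N be a binary unrooted phylogenetic network with no cherries, and let a = (a_1,...,a_k), k ≥ 2, be a maximal chain contained in a pendant level-1 blob (a cycle attached to the rest of the network by one non-trivial cut-edge, carrying exactly the leaves of the chain). Then the shortest distance between the end-leaves satisfies: d_m(a_1,a_k) = k+1 if 2 ≤ k ≤ 3, and d_m(a_1,a_k) = 4 if k ≥ 4; and the longest distance satisfies d_l(a_1,a_k) = max(k+1, 4). -/

import Mathlib

open SimpleGraph

/-- The degree of a vertex (defined without decidability assumptions). -/
noncomputable def gdeg {V : Type} (G : SimpleGraph V) (v : V) : ℕ :=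
  {u | G.Adj v u}.ncard

/-- The longest distance between two vertices: the supremum of the lengths of
paths between them. -/
noncomputable def ldistV {V : Type} (G : SimpleGraph V) (u v : V) : ℕ :=
  sSup {n | ∃ p : G.Walk u v, p.IsPath ∧ p.length = n}

/-- A binary unrooted phylogenetic network on the leaf-label set `X`:
a simple connected graph whose degree-1 vertices (the leaves) are bijectively
labelled by `X`, every other vertex having degree 3, with at least two leaves. -/
structure PhyloNet (V X : Type) where
  G : SimpleGraph V
  conn : G.Connected
  leaf : X → V
  leafInj : Function.Injective leaf
  leafDeg : ∀ x : X, gdeg G (leaf x) = 1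
  internalDeg : ∀ v : V, v ∉ Set.range leaf → gdeg G v = 3
  leafSurj : ∀ v : V, gdeg G v = 1 → v ∈ Set.range leaf
  twoLeaves : Nontrivial X

namespace PhyloNet

variable {V W X : Type}

/-- Shortest distance between two leaves. -/
noncomputable def dm (N : PhyloNet V X) (x y : X) : ℕ :=
  N.G.dist (N.leaf x) (N.leaf y)

/-- Longest distance between two leaves. -/
noncomputable def dl (N : PhyloNet V X) (x y : X) : ℕ :=
  ldistV N.G (N.leaf x) (N.leaf y)

/-- Two networks on the same label set realize the same shortest distance matrix. -/
def SameDist (N : PhyloNet V X) (M : PhyloNet W X) : Prop :=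
  ∀ x y : X, N.dm x y = M.dm x y

/-- Two networks realize the same longest distance matrix. -/
def SameLDist (N : PhyloNet V X) (M : PhyloNet W X) : Prop :=
  ∀ x y : X, N.dl x y = M.dl x y

/-- Label-preserving isomorphism of networks. -/
def Isom (N : PhyloNet V X) (M : PhyloNet W X) : Prop :=
  ∃ φ : N.G ≃g M.G, ∀ x : X, φ (N.leaf x) = M.leaf x

/-- `N` is reconstructible from its shortest distance matrix. -/
def Reconstructible (N : PhyloNet V X) : Prop :=
  ∀ (W : Type) (M : PhyloNet W X), N.SameDist M → N.Isom M

/-- Two leaves form a cherry: they share a common neighbour. -/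
def Cherry (N : PhyloNet V X) (x y : X) : Prop :=
  x ≠ y ∧ ∃ v : V, N.G.Adj (N.leaf x) v ∧ N.G.Adj (N.leaf y) v

def NoCherry (N : PhyloNet V X) : Prop := ∀ x y : X, ¬ N.Cherry x y

/-- `uv` is a cut-edge. -/
def IsCutEdge (N : PhyloNet V X) (u v : V) : Prop :=
  N.G.Adj u v ∧ ¬ (N.G.deleteEdges {s(u, v)}).Reachable u v

/-- Leaf `x` lies on the `u`-side of the cut-edge `uv`. -/
def leafSide (N : PhyloNet V X) (u v : V) (x : X) : Prop :=
  (N.G.deleteEdges {s(u, v)}).Reachable (N.leaf x) u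

/-- `A` is a part of a cut-edge induced split of `N`. -/
def IsSplitPart (N : PhyloNet V X) (A : Set X) : Prop :=
  ∃ u v : V, N.IsCutEdge u v ∧ ∀ x : X, N.leafSide u v x ↔ x ∈ A

/-- Every cut-edge of `N` induces a unique split. -/
def UniqueSplits (N : PhyloNet V X) : Prop :=
  ∀ u v u' v' : V, N.IsCutEdge u v → N.IsCutEdge u' v' →
    ((∀ x : X, N.leafSide u v x ↔ N.leafSide u' v' x) ∨
      (∀ x : X, N.leafSide u v x ↔ N.leafSide v' u' x)) →
    s(u, v) = s(u', v')

/-- `l` is a chain of leaves: the neighbours of its members form a path. -/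
def IsChain (N : PhyloNet V X) (l : List X) : Prop :=
  l ≠ [] ∧ ∃ vs : List V, ∃ h : vs.length = l.length,
    vs.Nodup ∧ List.Chain' N.G.Adj vs ∧
    ∀ (i : ℕ) (hi : i < l.length),
      N.G.Adj (N.leaf (l.get ⟨i, hi⟩)) (vs.get ⟨i, by omega⟩)

/-- A maximal chain: not a subsequence of any other chain. -/
def MaxChain (N : PhyloNet V X) (l : List X) : Prop :=
  N.IsChain l ∧ ∀ m : List X, N.IsChain m → l.Sublist m → m = l

end PhyloNet

/-- A set of at least three vertices is 2-connected if it induces a connected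
graph that stays connected after removal of any single vertex. -/
def TwoConn {V : Type} (G : SimpleGraph V) (B : Set V) : Prop :=
  3 ≤ B.ncard ∧ (G.induce B).Connected ∧
    ∀ v ∈ B, (G.induce (B \ {v})).Connected

/-- A blob: a maximal 2-connected set of vertices (with at least three vertices). -/
def IsBlob {V : Type} (G : SimpleGraph V) (B : Set V) : Prop :=
  TwoConn G B ∧ ∀ C : Set V, TwoConn G C → B ⊆ C → C = B

/-- Number of edges with both endpoints in `B`. -/
noncomputable def edgesIn {V : Type} (G : SimpleGraph V) (B : Set V) : ℕ :=
  {e : Sym2 V | e ∈ G.edgeSet ∧ ∀ v ∈ e, v ∈ B}.ncard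

/-- `G` is a level-(≤ k) network: every blob has cycle rank at most `k`,
i.e. removing at most `k` edges from each blob yields a tree. -/
def LevelLE {V : Type} (G : SimpleGraph V) (k : ℕ) : Prop :=
  ∀ B : Set V, IsBlob G B → edgesIn G B ≤ (B.ncard - 1) + k

namespace PhyloNet

variable {V X : Type}

/-- A trivial cut-edge is one incident to a leaf. -/
def TrivialCutEdge (N : PhyloNet V X) (u v : V) : Prop :=
  u ∈ Set.range N.leaf ∨ v ∈ Set.range N.leaf

/-- A pendant blob: a blob incident to exactly one non-trivial cut-edge. -/
def IsPendantBlob (N : PhyloNet V X) (B : Set V) : Prop :=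
  IsBlob N.G B ∧
    ∃! e : Sym2 V, ∃ u v : V, e = s(u, v) ∧ u ∈ B ∧ v ∉ B ∧
      N.G.Adj u v ∧ ¬ N.TrivialCutEdge u v

/-- The leaves attached to (contained in) a blob. -/
def blobLeaves (N : PhyloNet V X) (B : Set V) : Set X :=
  {x : X | ∃ u ∈ B, N.G.Adj (N.leaf x) u}

/-- `N` has a leaf on each generator side: every vertex is within shortest
distance 2 of some leaf. -/
def LeafOnEachGenSide (N : PhyloNet V X) : Prop :=
  ∀ v : V, ∃ x : X, N.G.dist v (N.leaf x) ≤ 2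

end PhyloNet

/-- shortest and longest distances between the end-leaves of the
chain `(a_0, …, a_{k-1})` carried by a pendant level-1 blob (a cycle
`w, v_0, …, v_{k-1}` where `w` carries the non-trivial cut-edge). -/
theorem pendant_level1_chain_end_distances {V X : Type} (N : PhyloNet V X)
    (hnc : N.NoCherry) (k : ℕ) (hk : 2 ≤ k)
    (w : V) (v : Fin k → V) (a : Fin k → X)
    (hvinj : Function.Injective v) (hvw : ∀ i, v i ≠ w)
    (hainj : Function.Injective a)
    (hw0 : N.G.Adj w (v ⟨0, by omega⟩))
    (hwl : N.G.Adj w (v ⟨k - 1, by omega⟩))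
    (hchain : ∀ (i : ℕ) (hi : i + 1 < k),
      N.G.Adj (v ⟨i, by omega⟩) (v ⟨i + 1, hi⟩))
    (hleaf : ∀ i : Fin k, N.G.Adj (N.leaf (a i)) (v i))
    (hclosed : ∀ (i : Fin k) (u : V), N.G.Adj (v i) u →
      u = N.leaf (a i) ∨ (((i : ℕ) = 0 ∨ (i : ℕ) + 1 = k) ∧ u = w) ∨
        ∃ j : Fin k, (((j : ℕ) + 1 = (i : ℕ)) ∨ ((i : ℕ) + 1 = (j : ℕ))) ∧
          u = v j)
    (hnt : ∃ t : V, N.G.Adj w t ∧ t ∉ Set.range v ∧ t ∉ Set.range N.leaf) :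
    (k ≤ 3 → N.dm (a ⟨0, by omega⟩) (a ⟨k - 1, by omega⟩) = k + 1) ∧
    (4 ≤ k → N.dm (a ⟨0, by omega⟩) (a ⟨k - 1, by omega⟩) = 4) ∧
    N.dl (a ⟨0, by omega⟩) (a ⟨k - 1, by omega⟩) = max (k + 1) 4 := by
  classical
  obtain ⟨t, hwt, htv, htl⟩ := hnt
  have hk0 : 0 < k := by omega
  have hkl : k - 1 < k := by omega
  have hne0l : (⟨0, hk0⟩ : Fin k) ≠ ⟨k - 1, hkl⟩ := by
    intro h
    have := congrArg Fin.val h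
    simp only [Fin.val_mk] at this
    omega
  -- uniqueness of neighbours of a leaf
  have huniq : ∀ (x : X) (u u' : V), N.G.Adj (N.leaf x) u → N.G.Adj (N.leaf x) u' →
      u = u' := by
    intro x u u' hu hu'
    have hd := N.leafDeg x
    unfold gdeg at hd
    obtain ⟨z, hz⟩ := Set.ncard_eq_one.mp hd
    have h1 : u ∈ {u | N.G.Adj (N.leaf x) u} := hu
    have h2 : u' ∈ {u | N.G.Adj (N.leaf x) u} := hu'
    rw [hz] at h1 h2
    simp only [Set.mem_singleton_iff] at h1 h2
    rw [h1, h2]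
  have hnotleaf : ∀ z u u' : V, u ≠ u' → N.G.Adj z u → N.G.Adj z u' →
      z ∉ Set.range N.leaf := by
    rintro z u u' hne hu hu' ⟨x, rfl⟩
    exact hne (huniq x u u' hu hu')
  have hwnl : w ∉ Set.range N.leaf :=
    hnotleaf w _ _ (fun h => hne0l (hvinj h)) hw0 hwl
  have hvnl : ∀ j : Fin k, v j ∉ Set.range N.leaf := by
    intro j
    rcases Nat.eq_zero_or_pos j.val with hj0 | hj0
    · have hj : j = ⟨0, hk0⟩ := Fin.ext hj0
      subst hj
      have h1k : 0 + 1 < k ∨ 0 + 1 = k := by omega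
      rcases h1k with h1k | h1k
      · exact hnotleaf _ _ _ (fun h => (hvw ⟨0 + 1, h1k⟩) (by rw [← h])) hw0.symm
          (hchain 0 h1k)
      · -- k = 1 impossible since k ≥ 2
        omega
    · rcases Nat.lt_or_ge j.val (k - 1) with hjl | hjl
      · -- interior (or 0 < j < k-1): neighbours v (j-1) and v (j+1)
        have hj1 : (j.val - 1) + 1 < k := by omega
        have hj2 : j.val + 1 < k := by omega
        have he : (⟨j.val - 1 + 1, hj1⟩ : Fin k) = j := Fin.ext (by simp; omega)
        have h1 : N.G.Adj (v j) (v ⟨j.val - 1, by omega⟩) := by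
          have := (hchain (j.val - 1) hj1).symm
          rwa [he] at this
        have h2 : N.G.Adj (v j) (v ⟨j.val + 1, hj2⟩) := by
          have := hchain j.val hj2
          have he2 : (⟨j.val, by omega⟩ : Fin k) = j := Fin.ext rfl
          rwa [he2] at this
        refine hnotleaf _ _ _ (fun h => ?_) h1 h2
        have := congrArg Fin.val (hvinj h)
        simp only [Fin.val_mk] at this
        omega
      · -- j = k - 1
        have hjk := j.isLt
        have hj : j = ⟨k - 1, hkl⟩ := Fin.ext (by simp only [Fin.val_mk]; omega)
        subst hj
        have hj1 : (k - 2) + 1 < k := by omega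
        have he : (⟨k - 2 + 1, hj1⟩ : Fin k) = ⟨k - 1, hkl⟩ := Fin.ext (by simp; omega)
        have h1 : N.G.Adj (v ⟨k - 1, hkl⟩) (v ⟨k - 2, by omega⟩) := by
          have := (hchain (k - 2) hj1).symm
          rwa [he] at this
        refine hnotleaf _ _ _ (fun h => ?_) hwl.symm h1
        exact hvw _ h.symm
  -- neighbours of w
  have hwnbr : ∀ u : V, N.G.Adj w u → u = v ⟨0, hk0⟩ ∨ u = v ⟨k - 1, hkl⟩ ∨ u = t := by
    have hd := N.internalDeg w hwnl
    unfold gdeg at hd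
    have hfin : {u | N.G.Adj w u}.Finite :=
      Set.finite_of_ncard_ne_zero (by rw [hd]; omega)
    have hv0t : v ⟨0, hk0⟩ ≠ t := fun h => htv ⟨_, h⟩
    have hvlt : v ⟨k - 1, hkl⟩ ≠ t := fun h => htv ⟨_, h⟩
    have hv0l : v ⟨0, hk0⟩ ≠ v ⟨k - 1, hkl⟩ := fun h => hne0l (hvinj h)
    have hsub : ({v ⟨0, hk0⟩, v ⟨k - 1, hkl⟩, t} : Set V) ⊆ {u | N.G.Adj w u} := by
      rintro u (rfl | rfl | rfl)
      · exact hw0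
      · exact hwl
      · exact hwt
    have h3 : ({v ⟨0, hk0⟩, v ⟨k - 1, hkl⟩, t} : Set V).ncard = 3 := by
      rw [Set.ncard_insert_of_notMem (by simp [hv0l, hv0t]),
        Set.ncard_pair hvlt]
    have heq := Set.eq_of_subset_of_ncard_le hsub (by rw [hd, h3]) hfin
    intro u hu
    have : u ∈ ({v ⟨0, hk0⟩, v ⟨k - 1, hkl⟩, t} : Set V) := by
      rw [heq]; exact hu
    simpa using this
  -- the "inside" set S
  set lfe := N.leaf (a ⟨k - 1, hkl⟩) with hlfe
  set S : Set V := {w} ∪ Set.range v ∪ Set.range (fun i => N.leaf (a i)) with hS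

  have hmemS : ∀ z : V, (z = w ∨ (∃ j, v j = z) ∨ (∃ j, N.leaf (a j) = z)) → z ∈ S := by
    intro z hz
    simp only [hS, Set.mem_union, Set.mem_singleton_iff, Set.mem_range]
    tauto
  have hmemS' : ∀ z : V, z ∈ S → (z = w ∨ (∃ j, v j = z) ∨ (∃ j, N.leaf (a j) = z)) := by
    intro z hz
    simp only [hS, Set.mem_union, Set.mem_singleton_iff, Set.mem_range] at hz
    tauto
  have hlfeS : lfe ∈ S := hmemS _ (Or.inr (Or.inr ⟨⟨k - 1, hkl⟩, rfl⟩))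
  have htS : t ∉ S := by
    intro h
    rcases hmemS' t h with rfl | ⟨j, hj⟩ | ⟨j, hj⟩
    · exact N.G.irrefl hwt
    · exact htv ⟨j, hj⟩
    · exact htl ⟨a j, hj⟩
  -- once a walk leaves S without using w, it can never reach lfe
  have T : ∀ u : V, u ∉ S → ∀ r : N.G.Walk u lfe, w ∉ r.support → False := by
    intro u hu r hwr
    obtain ⟨d, hd, hdf, hds⟩ := r.exists_boundary_dart Sᶜ hu (by simpa using hlfeS)
    have hds' : d.snd ∈ S := not_not.mp hds
    have hadj : N.G.Adj d.fst d.snd := d.adj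
    rcases hmemS' _ hds' with hdw | ⟨j, hj⟩ | ⟨j, hj⟩
    · exact hwr (hdw ▸ r.dart_snd_mem_support_of_mem_darts hd)
    · have : N.G.Adj (v j) d.fst := by rw [hj]; exact hadj.symm
      rcases hclosed j _ this with h1 | ⟨_, h1⟩ | ⟨j', _, h1⟩
      · exact hdf (hmemS _ (Or.inr (Or.inr ⟨j, h1.symm⟩)))
      · exact hdf (hmemS _ (Or.inl h1))
      · exact hdf (hmemS _ (Or.inr (Or.inl ⟨j', h1.symm⟩)))
    · have : N.G.Adj (N.leaf (a j)) d.fst := by rw [hj]; exact hadj.symm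
      have h1 : d.fst = v j := huniq (a j) _ _ this (hleaf j)
      exact hdf (hmemS _ (Or.inr (Or.inl ⟨j, h1.symm⟩)))
  -- entering a leaf other than the final one is a dead end
  have Dlem : ∀ i : Fin k, i ≠ ⟨k - 1, hkl⟩ →
      ∀ r : N.G.Walk (N.leaf (a i)) lfe, v i ∉ r.support → False := by
    intro i hi r hv
    have hne : N.leaf (a i) ≠ lfe := fun h => hi (hainj (N.leafInj h))
    obtain ⟨u2, h2, r', rfl⟩ := r.exists_eq_cons_of_ne hne
    have hu2 : u2 = v i := huniq (a i) _ _ h2 (hleaf i)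
    subst hu2
    exact hv (by rw [SimpleGraph.Walk.support_cons]; exact List.mem_cons_of_mem _ r'.start_mem_support)
  -- a path from a vertex to itself is trivial
  have loopnil : ∀ (x : V) (r : N.G.Walk x x), r.IsPath → r.length = 0 := by
    intro x r hr
    cases r with
    | nil => rfl
    | cons h2 r2 =>
      rw [SimpleGraph.Walk.cons_isPath_iff] at hr
      exact absurd r2.end_mem_support hr.2
  -- forward march along the cycle
  have K : ∀ n : ℕ, ∀ (i : ℕ) (hi : i < k), 1 ≤ i →
      ∀ q : N.G.Walk (v ⟨i, hi⟩) lfe, q.length ≤ n → q.IsPath →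
      (∀ (j : ℕ) (hj : j < k), j < i → v ⟨j, hj⟩ ∉ q.support) →
      q.length = k - i := by
    intro n
    induction n with
    | zero =>
      intro i hi h1 q hlen hq hforb
      have h0 := SimpleGraph.Walk.eq_of_length_eq_zero (Nat.le_zero.mp hlen)
      exact absurd h0 (fun h => hvnl ⟨i, hi⟩ ⟨_, h.symm⟩)
    | succ n IH =>
      intro i hi h1 q hlen hq hforb
      have hne : v ⟨i, hi⟩ ≠ lfe := fun h => hvnl _ ⟨_, h.symm⟩
      obtain ⟨u2, h2, q2, rfl⟩ := q.exists_eq_cons_of_ne hne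
      rw [SimpleGraph.Walk.cons_isPath_iff] at hq
      rcases hclosed ⟨i, hi⟩ u2 h2 with hu | ⟨hcase, hu⟩ | ⟨j, hj, hu⟩
      · subst hu
        by_cases hik : i = k - 1
        · subst hik
          have h0 := loopnil lfe q2 hq.1
          rw [SimpleGraph.Walk.length_cons, h0]
          omega
        · have hfne : (⟨i, hi⟩ : Fin k) ≠ ⟨k - 1, hkl⟩ := by
            intro h
            have := congrArg Fin.val h
            simp only [Fin.val_mk] at this
            omega
          exact (Dlem ⟨i, hi⟩ hfne q2 hq.2).elim
      · have hu' : w = u2 := hu.symm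
        subst hu'
        have hcase' : i = 0 ∨ i + 1 = k := by simpa using hcase
        have hwne : w ≠ lfe := fun h => hwnl ⟨_, h.symm⟩
        obtain ⟨u3, h3, q3, rfl⟩ := q2.exists_eq_cons_of_ne hwne
        have hq1 := hq.1
        rw [SimpleGraph.Walk.cons_isPath_iff] at hq1
        rcases hwnbr u3 h3 with hu3 | hu3 | hu3
        · subst hu3
          refine (hforb 0 hk0 (by omega) ?_).elim
          rw [SimpleGraph.Walk.support_cons, SimpleGraph.Walk.support_cons]
          exact List.mem_cons_of_mem _ (List.mem_cons_of_mem _ q3.start_mem_support)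
        · subst hu3
          have hieq : (⟨i, hi⟩ : Fin k) = ⟨k - 1, hkl⟩ := Fin.ext (by
            simp only [Fin.val_mk]; omega)
          refine (hq.2 ?_).elim
          rw [hieq, SimpleGraph.Walk.support_cons]
          exact List.mem_cons_of_mem _ q3.start_mem_support
        · have hu3' : t = u3 := hu3.symm
          subst hu3'
          exact (T t htS q3 hq1.2).elim
      · subst hu
        simp only [Fin.val_mk] at hj
        rcases hj with hj | hj
        · have hj' : (j : ℕ) < i := by omega
          refine (hforb j j.isLt hj' ?_).elim
          rw [SimpleGraph.Walk.support_cons]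
          exact List.mem_cons_of_mem _ q2.start_mem_support
        · have hjlt : i + 1 < k := by have := j.isLt; omega
          have hjeq : j = ⟨i + 1, hjlt⟩ := Fin.ext (by simp only [Fin.val_mk]; omega)
          subst hjeq
          rw [SimpleGraph.Walk.length_cons] at hlen
          have hforb' : ∀ (j' : ℕ) (hj' : j' < k), j' < i + 1 → v ⟨j', hj'⟩ ∉ q2.support := by
            intro j' hj' hlt
            by_cases hji : j' = i
            · subst hji
              exact hq.2
            · intro hmem
              exact hforb j' hj' (by omega)
                (by rw [SimpleGraph.Walk.support_cons]; exact List.mem_cons_of_mem _ hmem)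
          have hrec := IH (i + 1) hjlt (by omega) q2 (by omega) hq.1 hforb'
          rw [SimpleGraph.Walk.length_cons, hrec]
          omega
  -- backward march along the cycle is impossible
  have K' : ∀ (i : ℕ) (hi : i < k - 1),
      ∀ q : N.G.Walk (v ⟨i, by omega⟩) lfe, q.IsPath → w ∉ q.support →
      (∀ (j : ℕ) (hj : j < k), i < j → v ⟨j, hj⟩ ∉ q.support) → False := by
    intro i
    induction i using Nat.strong_induction_on with
    | _ i IH =>
      intro hi q hq hwq hforb
      have hik : i < k := by omega
      have hne : v ⟨i, by omega⟩ ≠ lfe := fun h => hvnl _ ⟨_, h.symm⟩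
      obtain ⟨u2, h2, q2, rfl⟩ := q.exists_eq_cons_of_ne hne
      rw [SimpleGraph.Walk.cons_isPath_iff] at hq
      rcases hclosed ⟨i, by omega⟩ u2 h2 with hu | ⟨hcase, hu⟩ | ⟨j, hj, hu⟩
      · subst hu
        have hfne : (⟨i, by omega⟩ : Fin k) ≠ ⟨k - 1, hkl⟩ := by
          intro h
          have := congrArg Fin.val h
          simp only [Fin.val_mk] at this
          omega
        exact Dlem _ hfne q2 hq.2
      · have hu' : w = u2 := hu.symm
        subst hu'
        exact hwq (by rw [SimpleGraph.Walk.support_cons]; exact List.mem_cons_of_mem _ q2.start_mem_support)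
      · subst hu
        simp only [Fin.val_mk] at hj
        rcases hj with hj | hj
        · have hjlt : (j : ℕ) < k - 1 := by omega
          refine IH (j : ℕ) (by omega) hjlt q2 hq.1 ?_ ?_
          · intro hm
            exact hwq (by rw [SimpleGraph.Walk.support_cons]; exact List.mem_cons_of_mem _ hm)
          · intro j' hj' hlt
            by_cases hji : j' = i
            · subst hji
              exact hq.2
            · intro hmem
              exact hforb j' hj' (by omega)
                (by rw [SimpleGraph.Walk.support_cons]; exact List.mem_cons_of_mem _ hmem)
        · refine hforb j j.isLt (by omega) ?_
          rw [SimpleGraph.Walk.support_cons]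
          exact List.mem_cons_of_mem _ q2.start_mem_support
  -- classification of all paths between the two end leaves
  have M : ∀ p : N.G.Walk (N.leaf (a ⟨0, hk0⟩)) lfe, p.IsPath →
      p.length = k + 1 ∨ p.length = 4 := by
    intro p hp
    have hne1 : N.leaf (a ⟨0, hk0⟩) ≠ lfe := fun h => hne0l (hainj (N.leafInj h))
    obtain ⟨u1, h1, p1, rfl⟩ := p.exists_eq_cons_of_ne hne1
    have hu1 : u1 = v ⟨0, hk0⟩ := huniq _ _ _ h1 (hleaf _)
    subst hu1
    rw [SimpleGraph.Walk.cons_isPath_iff] at hp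
    have hne2 : v ⟨0, hk0⟩ ≠ lfe := fun h => hvnl _ ⟨_, h.symm⟩
    obtain ⟨u2, h2, p2, rfl⟩ := p1.exists_eq_cons_of_ne hne2
    have hp1 := hp.1
    rw [SimpleGraph.Walk.cons_isPath_iff] at hp1
    rcases hclosed ⟨0, hk0⟩ u2 h2 with hu | ⟨_, hu⟩ | ⟨j, hj, hu⟩
    · subst hu
      exact (hp.2 (by rw [SimpleGraph.Walk.support_cons]; exact List.mem_cons_of_mem _ p2.start_mem_support)).elim
    · have hu' : w = u2 := hu.symm
      subst hu'
      have hwne : w ≠ lfe := fun h => hwnl ⟨_, h.symm⟩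
      obtain ⟨u3, h3, p3, rfl⟩ := p2.exists_eq_cons_of_ne hwne
      have hp2 := hp1.1
      rw [SimpleGraph.Walk.cons_isPath_iff] at hp2
      rcases hwnbr u3 h3 with hu3 | hu3 | hu3
      · subst hu3
        exact (hp1.2 (by rw [SimpleGraph.Walk.support_cons]; exact List.mem_cons_of_mem _ p3.start_mem_support)).elim
      · subst hu3
        have hne3 : v ⟨k - 1, hkl⟩ ≠ lfe := fun h => hvnl _ ⟨_, h.symm⟩
        obtain ⟨u4, h4, p4, rfl⟩ := p3.exists_eq_cons_of_ne hne3
        have hp3 := hp2.1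
        rw [SimpleGraph.Walk.cons_isPath_iff] at hp3
        rcases hclosed ⟨k - 1, hkl⟩ u4 h4 with hu4 | ⟨_, hu4⟩ | ⟨j, hj, hu4⟩
        · subst hu4
          have h0 := loopnil lfe p4 hp3.1
          right
          simp only [SimpleGraph.Walk.length_cons, h0]
        · have hu4' : w = u4 := hu4.symm
          subst hu4'
          exact (hp2.2 (by rw [SimpleGraph.Walk.support_cons]; exact List.mem_cons_of_mem _ p4.start_mem_support)).elim
        · subst hu4
          simp only [Fin.val_mk] at hj
          rcases hj with hj | hj
          · by_cases hk2 : k = 2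
            · have hj0 : j = ⟨0, hk0⟩ := Fin.ext (by simp only [Fin.val_mk]; omega)
              subst hj0
              exact (hp1.2 (by rw [SimpleGraph.Walk.support_cons, SimpleGraph.Walk.support_cons]; exact List.mem_cons_of_mem _ (List.mem_cons_of_mem _ p4.start_mem_support))).elim
            · have hjlt : (j : ℕ) < k - 1 := by have := j.isLt; omega
              refine (K' (j : ℕ) hjlt p4 hp3.1 ?_ ?_).elim
              · intro hm
                exact hp2.2 (by rw [SimpleGraph.Walk.support_cons]; exact List.mem_cons_of_mem _ hm)
              · intro j' hj' hlt
                have hj'e : j' = k - 1 := by omega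
                subst hj'e
                exact hp3.2
          · exact absurd j.isLt (by omega)
      · have hu3' : t = u3 := hu3.symm
        subst hu3'
        exact (T t htS p3 hp2.2).elim
    · subst hu
      simp only [Fin.val_mk] at hj
      rcases hj with hj | hj
      · omega
      · have hforb' : ∀ (j' : ℕ) (hj' : j' < k), j' < (j : ℕ) → v ⟨j', hj'⟩ ∉ p2.support := by
          intro j' hj' hlt
          have hj'0 : j' = 0 := by omega
          subst hj'0
          exact hp1.2
        have hrec := K p2.length (j : ℕ) j.isLt (by omega) p2 le_rfl hp1.1 hforb'
        left
        simp only [SimpleGraph.Walk.length_cons]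
        omega
  -- the short path through w
  have hW4 : ∃ p : N.G.Walk (N.leaf (a ⟨0, hk0⟩)) lfe, p.IsPath ∧ p.length = 4 := by
    have n1 : N.leaf (a ⟨0, hk0⟩) ≠ v ⟨0, hk0⟩ := fun h => hvnl _ ⟨_, h⟩
    have n2 : N.leaf (a ⟨0, hk0⟩) ≠ w := fun h => hwnl ⟨_, h⟩
    have n3 : N.leaf (a ⟨0, hk0⟩) ≠ v ⟨k - 1, hkl⟩ := fun h => hvnl _ ⟨_, h⟩
    have n4 : N.leaf (a ⟨0, hk0⟩) ≠ lfe := fun h => hne0l (hainj (N.leafInj h))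
    have n5 : v ⟨0, hk0⟩ ≠ w := hvw _
    have n6 : v ⟨0, hk0⟩ ≠ v ⟨k - 1, hkl⟩ := fun h => hne0l (hvinj h)
    have n7 : v ⟨0, hk0⟩ ≠ lfe := fun h => hvnl _ ⟨_, h.symm⟩
    have n8 : w ≠ v ⟨k - 1, hkl⟩ := fun h => hvw _ h.symm
    have n9 : w ≠ lfe := fun h => hwnl ⟨_, h.symm⟩
    have n10 : v ⟨k - 1, hkl⟩ ≠ lfe := fun h => hvnl _ ⟨_, h.symm⟩
    refine ⟨SimpleGraph.Walk.cons (hleaf ⟨0, hk0⟩) (SimpleGraph.Walk.cons hw0.symm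
      (SimpleGraph.Walk.cons hwl (SimpleGraph.Walk.cons (hleaf ⟨k - 1, hkl⟩).symm
        SimpleGraph.Walk.nil))), ?_, rfl⟩
    simp [SimpleGraph.Walk.isPath_def, n1, n2, n3, n4, n5, n6, n7, n8, n9, n10]
    exact ⟨n4, n7, n9, n10⟩
  -- the long path around the cycle
  have up : ∀ (m i : ℕ) (hi : i < k), k - 1 - i ≤ m →
      ∃ q : N.G.Walk (v ⟨i, hi⟩) (v ⟨k - 1, hkl⟩),
        q.length = k - 1 - i ∧ q.IsPath ∧
        ∀ x ∈ q.support, ∃ (j : ℕ) (hj : j < k), i ≤ j ∧ x = v ⟨j, hj⟩ := by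
    intro m
    induction m with
    | zero =>
      intro i hi hle
      have hik : i = k - 1 := by omega
      subst hik
      exact ⟨SimpleGraph.Walk.nil, by rw [SimpleGraph.Walk.length_nil]; omega,
        SimpleGraph.Walk.IsPath.nil, fun x hx => ⟨k - 1, hkl, le_rfl, by simpa using hx⟩⟩
    | succ m IH =>
      intro i hi hle
      by_cases hik : i = k - 1
      · subst hik
        exact ⟨SimpleGraph.Walk.nil, by rw [SimpleGraph.Walk.length_nil]; omega,
          SimpleGraph.Walk.IsPath.nil, fun x hx => ⟨k - 1, hkl, le_rfl, by simpa using hx⟩⟩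
      · have hi1 : i + 1 < k := by omega
        obtain ⟨q, hlen, hpath, hsupp⟩ := IH (i + 1) hi1 (by omega)
        refine ⟨SimpleGraph.Walk.cons (hchain i hi1) q, ?_, ?_, ?_⟩
        · rw [SimpleGraph.Walk.length_cons, hlen]; omega
        · rw [SimpleGraph.Walk.cons_isPath_iff]
          refine ⟨hpath, fun hmem => ?_⟩
          obtain ⟨j, hj, hij, hx⟩ := hsupp _ hmem
          have := congrArg Fin.val (hvinj hx)
          simp only [Fin.val_mk] at this
          omega
        · intro x hx
          rw [SimpleGraph.Walk.support_cons, List.mem_cons] at hx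
          rcases hx with rfl | hx
          · exact ⟨i, by omega, le_rfl, rfl⟩
          · obtain ⟨j, hj, hij, hx⟩ := hsupp _ hx
            exact ⟨j, hj, by omega, hx⟩
  have hWk : ∃ p : N.G.Walk (N.leaf (a ⟨0, hk0⟩)) lfe, p.IsPath ∧ p.length = k + 1 := by
    obtain ⟨q, hlen, hpath, hsupp⟩ := up (k - 1) 0 hk0 (by omega)
    refine ⟨SimpleGraph.Walk.cons (hleaf ⟨0, hk0⟩) (q.concat (hleaf ⟨k - 1, hkl⟩).symm),
      ?_, ?_⟩
    · rw [SimpleGraph.Walk.cons_isPath_iff]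
      constructor
      · rw [SimpleGraph.Walk.isPath_def, SimpleGraph.Walk.support_concat,
          List.nodup_append]
        refine ⟨(SimpleGraph.Walk.isPath_def q).mp hpath, List.nodup_singleton _, ?_⟩
        intro x hx y hy hx'
        rw [List.mem_singleton] at hy
        subst hy
        subst hx'
        obtain ⟨j, hj, _, hx⟩ := hsupp _ hx
        exact hvnl ⟨j, hj⟩ ⟨_, hx⟩
      · rw [SimpleGraph.Walk.support_concat, List.mem_append]
        rintro (hx | hx)
        · obtain ⟨j, hj, _, hx⟩ := hsupp _ hx
          exact hvnl ⟨j, hj⟩ ⟨_, hx⟩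
        · rw [List.mem_singleton] at hx
          exact hne0l (hainj (N.leafInj hx))
    · rw [SimpleGraph.Walk.length_cons, SimpleGraph.Walk.length_concat, hlen]
      omega
  -- assembling everything
  obtain ⟨pk, hpkP, hpkL⟩ := hWk
  obtain ⟨p4, hp4P, hp4L⟩ := hW4
  have hset : {n : ℕ | ∃ p : N.G.Walk (N.leaf (a ⟨0, hk0⟩)) lfe, p.IsPath ∧ p.length = n}
      = {k + 1, 4} := by
    ext n
    simp only [Set.mem_setOf_eq, Set.mem_insert_iff, Set.mem_singleton_iff]
    constructor
    · rintro ⟨p, hp, rfl⟩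
      exact M p hp
    · rintro (rfl | rfl)
      · exact ⟨pk, hpkP, hpkL⟩
      · exact ⟨p4, hp4P, hp4L⟩
  have hreach : N.G.Reachable (N.leaf (a ⟨0, hk0⟩)) lfe := N.conn.preconnected _ _
  obtain ⟨p0, hp0len⟩ := hreach.exists_walk_length_eq_dist
  have hble : p0.bypass.length ≤ N.G.dist (N.leaf (a ⟨0, hk0⟩)) lfe := by
    rw [← hp0len]; exact p0.length_bypass_le
  have hd4 : N.G.dist (N.leaf (a ⟨0, hk0⟩)) lfe ≤ 4 := by
    rw [← hp4L]; exact SimpleGraph.dist_le p4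
  have hdk : N.G.dist (N.leaf (a ⟨0, hk0⟩)) lfe ≤ k + 1 := by
    rw [← hpkL]; exact SimpleGraph.dist_le pk
  have hbp := M p0.bypass p0.bypass_isPath
  have hdm : N.G.dist (N.leaf (a ⟨0, hk0⟩)) lfe = min (k + 1) 4 := by
    rcases hbp with h | h <;> omega
  refine ⟨?_, ?_, ?_⟩
  · intro h3
    show N.G.dist (N.leaf (a ⟨0, hk0⟩)) lfe = k + 1
    rw [hdm]; omega
  · intro h4
    show N.G.dist (N.leaf (a ⟨0, hk0⟩)) lfe = 4
    rw [hdm]; omega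
  · show ldistV N.G (N.leaf (a ⟨0, hk0⟩)) lfe = max (k + 1) 4
    unfold ldistV
    rw [hset]; exact csSup_pair _ _
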